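/- Let D, k, q, R₀ be positive real numbers and let d satisfy 0 < d ≤ R₀. Then ∫₀^∞ q · ( (1/2)·( erf((R₀+d)/(2·√(D·t))) + erf((R₀−d)/(2·√(D·t))) ) + (√(D·t)/(d·√π)) · ( exp(−(R₀+d)²/(4·D·t)) − exp(−(R₀−d)²/(4·D·t)) ) ) · exp(−k·t) dt = (q/(2·k²)) · ( 2·k − exp(−√(k/D)·(R₀+d)) · (exp(2·d·√(k/D)) − 1) · (√(D·k) + k·R₀) / d ). -/

import Mathlib

open MeasureTheory Real Set
open Filter Topology

/-- The Gauss error function `erf x = (2/√π) ∫₀ˣ exp(−u²) du`. -/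
noncomputable def erf (x : ℝ) : ℝ :=
  (2 / Real.sqrt π) * ∫ u in (0 : ℝ)..x, Real.exp (-u ^ 2)

noncomputable def erfc (x : ℝ) : ℝ := 1 - erf x

lemma gauss_cont : Continuous fun u : ℝ => Real.exp (-u ^ 2) := by continuity

lemma erf_hasDerivAt (x : ℝ) :
    HasDerivAt erf (2 / Real.sqrt π * Real.exp (-x ^ 2)) x := by
  have h := (intervalIntegral.integral_hasDerivAt_right
    (gauss_cont.intervalIntegrable 0 x)
    (gauss_cont.stronglyMeasurableAtFilter volume (𝓝 x))
    gauss_cont.continuousAt).const_mul (2 / Real.sqrt π)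
  exact h

lemma erf_continuous : Continuous erf :=
  continuous_iff_continuousAt.2 fun x => (erf_hasDerivAt x).continuousAt

lemma erf_zero : erf 0 = 0 := by simp [erf]

lemma erf_neg (x : ℝ) : erf (-x) = -erf x := by
  unfold erf
  have h2 : (∫ u in (0:ℝ)..(-x), Real.exp (-(-u) ^ 2))
      = ∫ u in (x:ℝ)..(0:ℝ), Real.exp (-u ^ 2) := by
    rw [intervalIntegral.integral_comp_neg (fun u : ℝ => Real.exp (-u ^ 2))]
    norm_num
  simp only [neg_neg, even_two, Even.neg_pow] at h2
  rw [h2, intervalIntegral.integral_symm, mul_neg]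

lemma tendsto_erf_atTop : Tendsto erf atTop (𝓝 1) := by
  have hi : IntegrableOn (fun u : ℝ => Real.exp (-u ^ 2)) (Ioi 0) := by
    have := integrableOn_Ioi_exp_neg_mul_sq_iff (b := (1:ℝ)) |>.2 one_pos
    simpa using this
  have h := MeasureTheory.intervalIntegral_tendsto_integral_Ioi 0 hi tendsto_id
  have hval : (∫ u in Ioi (0:ℝ), Real.exp (-u ^ 2)) = Real.sqrt π / 2 := by
    have := integral_gaussian_Ioi 1
    simpa using this
  rw [hval] at h
  have h2 := h.const_mul (2 / Real.sqrt π)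
  have : 2 / Real.sqrt π * (Real.sqrt π / 2) = 1 := by
    field_simp
  show Tendsto (fun x => 2 / Real.sqrt π * ∫ u in (0:ℝ)..x, Real.exp (-u ^ 2)) atTop (𝓝 1)
  simpa [erf, this] using h2

lemma tendsto_erf_atBot : Tendsto erf atBot (𝓝 (-1)) := by
  have h : Tendsto (fun x : ℝ => -erf (-x)) atBot (𝓝 (-1)) := by
    have := (tendsto_erf_atTop.comp tendsto_neg_atBot_atTop).neg
    simpa using this
  refine h.congr fun x => ?_
  rw [erf_neg, neg_neg]

lemma erf_mono : Monotone erf := by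
  refine monotone_of_deriv_nonneg (fun x => (erf_hasDerivAt x).differentiableAt) fun x => ?_
  rw [(erf_hasDerivAt x).deriv]
  positivity

lemma erf_le_one (x : ℝ) : erf x ≤ 1 := erf_mono.ge_of_tendsto tendsto_erf_atTop x

lemma neg_one_le_erf (x : ℝ) : -1 ≤ erf x := erf_mono.le_of_tendsto tendsto_erf_atBot x

lemma abs_erf_le_one (x : ℝ) : |erf x| ≤ 1 :=
  abs_le.2 ⟨neg_one_le_erf x, erf_le_one x⟩

lemma erfc_continuous : Continuous erfc := continuous_const.sub erf_continuous

lemma hasDerivAt_erfc (x : ℝ) :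
    HasDerivAt erfc (-(2 / Real.sqrt π * Real.exp (-x ^ 2))) x :=
  (erf_hasDerivAt x).const_sub 1

lemma erfc_zero : erfc 0 = 1 := by simp [erfc, erf_zero]

lemma erfc_add_erfc_neg (x : ℝ) : erfc x + erfc (-x) = 2 := by
  simp [erfc, erf_neg]; ring

lemma tendsto_erfc_atTop : Tendsto erfc atTop (𝓝 0) := by
  have := (tendsto_const_nhds (α := ℝ) (x := (1:ℝ)) (f := atTop)).sub tendsto_erf_atTop
  show Tendsto (fun x => 1 - erf x) atTop (𝓝 0)
  simpa [erfc] using this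

lemma tendsto_erfc_atBot : Tendsto erfc atBot (𝓝 2) := by
  have := (tendsto_const_nhds (α := ℝ) (x := (1:ℝ)) (f := atBot)).sub tendsto_erf_atBot
  have h2 : (1 : ℝ) - -1 = 2 := by norm_num
  show Tendsto (fun x => 1 - erf x) atBot (𝓝 2)
  simpa [erfc, h2] using this

noncomputable def auxW (k a t : ℝ) : ℝ :=
  -(1/k) * (Real.exp (-(k*t)) * erf (a/Real.sqrt t))
  - 1/(2*k) * (Real.exp (2*a*Real.sqrt k) * erfc (a/Real.sqrt t + Real.sqrt (k*t))
      + Real.exp (-(2*a*Real.sqrt k)) * erfc (a/Real.sqrt t - Real.sqrt (k*t)))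

noncomputable def auxV (k a t : ℝ) : ℝ :=
  (1/k) * (-(Real.sqrt t * Real.exp (-(a^2/t) - k*t))
    + Real.sqrt π/(4*Real.sqrt k) *
        (Real.exp (-(2*a*Real.sqrt k)) * erfc (a/Real.sqrt t - Real.sqrt (k*t))
         - Real.exp (2*a*Real.sqrt k) * erfc (a/Real.sqrt t + Real.sqrt (k*t)))
    + a*Real.sqrt π/2 *
        (Real.exp (2*a*Real.sqrt k) * erfc (a/Real.sqrt t + Real.sqrt (k*t))
         + Real.exp (-(2*a*Real.sqrt k)) * erfc (a/Real.sqrt t - Real.sqrt (k*t))))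

lemma hasDerivAt_Pf (k a : ℝ) {t : ℝ} (hk : 0 < k) (ht : 0 < t) :
    HasDerivAt (fun t => Real.exp (2*a*Real.sqrt k) * erfc (a / Real.sqrt t + Real.sqrt (k*t)))
      (Real.exp (-(a^2/t) - k*t) / Real.sqrt π *
        (a/(t*Real.sqrt t) - Real.sqrt k/Real.sqrt t)) t := by
  have hst : 0 < Real.sqrt t := Real.sqrt_pos.2 ht
  have hkt : 0 < k*t := mul_pos hk ht
  have hsq : HasDerivAt Real.sqrt (1/(2*Real.sqrt t)) t := hasDerivAt_sqrt ht.ne'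
  have hinv : HasDerivAt (fun t => (Real.sqrt t)⁻¹)
      (-(1/(2*Real.sqrt t)) / (Real.sqrt t)^2) t := hsq.inv hst.ne'
  have ha : HasDerivAt (fun t => a * (Real.sqrt t)⁻¹)
      (a * (-(1/(2*Real.sqrt t)) / (Real.sqrt t)^2)) t := hinv.const_mul a
  have hklin : HasDerivAt (fun t : ℝ => k*t) k t := by
    simpa using (hasDerivAt_id t).const_mul k
  have hsk : HasDerivAt (fun t => Real.sqrt (k*t)) (1/(2*Real.sqrt (k*t)) * k) t :=
    (hasDerivAt_sqrt hkt.ne').comp t hklin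
  have hin := ha.add hsk
  have hcomp := ((hasDerivAt_erfc (a * (Real.sqrt t)⁻¹ + Real.sqrt (k*t))).comp t hin).const_mul
    (Real.exp (2*a*Real.sqrt k))
  have hfun : (fun t : ℝ => Real.exp (2*a*Real.sqrt k) *
        (erfc ∘ fun t => a * (Real.sqrt t)⁻¹ + Real.sqrt (k*t)) t)
      = fun t : ℝ => Real.exp (2*a*Real.sqrt k) * erfc (a / Real.sqrt t + Real.sqrt (k*t)) := by
    funext u; simp [Function.comp, div_eq_mul_inv]
  simp only [Pi.add_def] at hcomp
  rw [hfun] at hcomp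
  refine hcomp.congr_deriv ?_
  symm
  obtain ⟨s, hs, rfl⟩ : ∃ s, 0 < s ∧ t = s^2 :=
    ⟨Real.sqrt t, Real.sqrt_pos.2 ht, (Real.sq_sqrt ht.le).symm⟩
  obtain ⟨r, hr, rfl⟩ : ∃ r, 0 < r ∧ k = r^2 :=
    ⟨Real.sqrt k, Real.sqrt_pos.2 hk, (Real.sq_sqrt hk.le).symm⟩
  rw [show r^2*s^2 = (r*s)^2 by ring, Real.sqrt_sq hs.le, Real.sqrt_sq hr.le,
    Real.sqrt_sq (by positivity : (0:ℝ) ≤ r*s)]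
  have hexp : Real.exp (2*a*r) * Real.exp (-(a * s⁻¹ + r*s)^2)
      = Real.exp (-(a^2/(s^2)) - (r*s)^2) := by
    rw [← Real.exp_add]; congr 1; field_simp; ring
  rw [← hexp]
  have hπ : Real.sqrt π ≠ 0 := (Real.sqrt_pos.2 Real.pi_pos).ne'
  field_simp
  ring

lemma hasDerivAt_Mf (k a : ℝ) {t : ℝ} (hk : 0 < k) (ht : 0 < t) :
    HasDerivAt (fun t => Real.exp (-(2*a*Real.sqrt k)) * erfc (a / Real.sqrt t - Real.sqrt (k*t)))
      (Real.exp (-(a^2/t) - k*t) / Real.sqrt π *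
        (a/(t*Real.sqrt t) + Real.sqrt k/Real.sqrt t)) t := by
  have hst : 0 < Real.sqrt t := Real.sqrt_pos.2 ht
  have hkt : 0 < k*t := mul_pos hk ht
  have hsq : HasDerivAt Real.sqrt (1/(2*Real.sqrt t)) t := hasDerivAt_sqrt ht.ne'
  have hinv : HasDerivAt (fun t => (Real.sqrt t)⁻¹)
      (-(1/(2*Real.sqrt t)) / (Real.sqrt t)^2) t := hsq.inv hst.ne'
  have ha : HasDerivAt (fun t => a * (Real.sqrt t)⁻¹)
      (a * (-(1/(2*Real.sqrt t)) / (Real.sqrt t)^2)) t := hinv.const_mul a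
  have hklin : HasDerivAt (fun t : ℝ => k*t) k t := by
    simpa using (hasDerivAt_id t).const_mul k
  have hsk : HasDerivAt (fun t => Real.sqrt (k*t)) (1/(2*Real.sqrt (k*t)) * k) t :=
    (hasDerivAt_sqrt hkt.ne').comp t hklin
  have hin := ha.sub hsk
  have hcomp := ((hasDerivAt_erfc (a * (Real.sqrt t)⁻¹ - Real.sqrt (k*t))).comp t hin).const_mul
    (Real.exp (-(2*a*Real.sqrt k)))
  have hfun : (fun t : ℝ => Real.exp (-(2*a*Real.sqrt k)) *
        (erfc ∘ fun t => a * (Real.sqrt t)⁻¹ - Real.sqrt (k*t)) t)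
      = fun t : ℝ => Real.exp (-(2*a*Real.sqrt k)) * erfc (a / Real.sqrt t - Real.sqrt (k*t)) := by
    funext u; simp [Function.comp, div_eq_mul_inv]
  simp only [Pi.sub_def] at hcomp
  rw [hfun] at hcomp
  refine hcomp.congr_deriv ?_
  symm
  obtain ⟨s, hs, rfl⟩ : ∃ s, 0 < s ∧ t = s^2 :=
    ⟨Real.sqrt t, Real.sqrt_pos.2 ht, (Real.sq_sqrt ht.le).symm⟩
  obtain ⟨r, hr, rfl⟩ : ∃ r, 0 < r ∧ k = r^2 :=
    ⟨Real.sqrt k, Real.sqrt_pos.2 hk, (Real.sq_sqrt hk.le).symm⟩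
  rw [show r^2*s^2 = (r*s)^2 by ring, Real.sqrt_sq hs.le, Real.sqrt_sq hr.le,
    Real.sqrt_sq (by positivity : (0:ℝ) ≤ r*s)]
  have hexp : Real.exp (-(2*a*r)) * Real.exp (-(a * s⁻¹ - r*s)^2)
      = Real.exp (-(a^2/(s^2)) - (r*s)^2) := by
    rw [← Real.exp_add]; congr 1; field_simp; ring
  rw [← hexp]
  have hπ : Real.sqrt π ≠ 0 := (Real.sqrt_pos.2 Real.pi_pos).ne'
  field_simp
  ring

lemma hasDerivAt_Ef (k a : ℝ) {t : ℝ} (hk : 0 < k) (ht : 0 < t) :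
    HasDerivAt (fun t => Real.exp (-(k*t)) * erf (a / Real.sqrt t))
      (-(k * (Real.exp (-(k*t)) * erf (a/Real.sqrt t)))
        - a * Real.exp (-(a^2/t) - k*t) / (Real.sqrt π * (t*Real.sqrt t))) t := by
  have hst : 0 < Real.sqrt t := Real.sqrt_pos.2 ht
  have hsq : HasDerivAt Real.sqrt (1/(2*Real.sqrt t)) t := hasDerivAt_sqrt ht.ne'
  have hinv : HasDerivAt (fun t => (Real.sqrt t)⁻¹)
      (-(1/(2*Real.sqrt t)) / (Real.sqrt t)^2) t := hsq.inv hst.ne'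
  have ha : HasDerivAt (fun t => a * (Real.sqrt t)⁻¹)
      (a * (-(1/(2*Real.sqrt t)) / (Real.sqrt t)^2)) t := hinv.const_mul a
  have hklin : HasDerivAt (fun t : ℝ => k*t) k t := by
    simpa using (hasDerivAt_id t).const_mul k
  have hexp1 : HasDerivAt (fun t : ℝ => Real.exp (-(k*t)))
      (Real.exp (-(k*t)) * -k) t := hklin.neg.exp
  have herf := (erf_hasDerivAt (a * (Real.sqrt t)⁻¹)).comp t ha
  have hmul := hexp1.mul herf
  have hfun : (fun t : ℝ => Real.exp (-(k*t)) *
        (erf ∘ fun t => a * (Real.sqrt t)⁻¹) t)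
      = fun t : ℝ => Real.exp (-(k*t)) * erf (a / Real.sqrt t) := by
    funext u; simp [Function.comp, div_eq_mul_inv]
  simp only [Pi.mul_def] at hmul
  rw [hfun] at hmul
  refine hmul.congr_deriv ?_
  symm
  obtain ⟨s, hs, rfl⟩ : ∃ s, 0 < s ∧ t = s^2 :=
    ⟨Real.sqrt t, Real.sqrt_pos.2 ht, (Real.sq_sqrt ht.le).symm⟩
  rw [Function.comp_apply, Real.sqrt_sq hs.le]
  have hexp : Real.exp (-(k*s^2)) * Real.exp (-(a * s⁻¹)^2)
      = Real.exp (-(a^2/(s^2)) - k*s^2) := by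
    rw [← Real.exp_add]; congr 1; field_simp; ring
  rw [show a / s = a * s⁻¹ from div_eq_mul_inv a s, ← hexp]
  have hπ : Real.sqrt π ≠ 0 := (Real.sqrt_pos.2 Real.pi_pos).ne'
  field_simp
  ring

lemma hasDerivAt_Sf (k a : ℝ) {t : ℝ} (hk : 0 < k) (ht : 0 < t) :
    HasDerivAt (fun t => Real.sqrt t * Real.exp (-(a^2/t) - k*t))
      (Real.exp (-(a^2/t) - k*t) *
        (1/(2*Real.sqrt t) + a^2/(t*Real.sqrt t) - k*Real.sqrt t)) t := by
  have hst : 0 < Real.sqrt t := Real.sqrt_pos.2 ht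
  have hsq : HasDerivAt Real.sqrt (1/(2*Real.sqrt t)) t := hasDerivAt_sqrt ht.ne'
  have hklin : HasDerivAt (fun t : ℝ => k*t) k t := by
    simpa using (hasDerivAt_id t).const_mul k
  have hi : HasDerivAt (fun t : ℝ => t⁻¹) (-(t^2)⁻¹) t := hasDerivAt_inv ht.ne'
  have hinner : HasDerivAt (fun t : ℝ => -(a^2 * t⁻¹) - k*t)
      (-(a^2 * -(t^2)⁻¹) - k) t := ((hi.const_mul (a^2)).neg).sub hklin
  have hexp := hinner.exp
  have hmul := hsq.mul hexp
  have hfun : (fun t : ℝ => Real.sqrt t * Real.exp (-(a^2 * t⁻¹) - k*t))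
      = fun t : ℝ => Real.sqrt t * Real.exp (-(a^2/t) - k*t) := by
    funext u; rw [div_eq_mul_inv]
  simp only [Pi.mul_def] at hmul
  rw [hfun] at hmul
  refine hmul.congr_deriv ?_
  symm
  obtain ⟨s, hs, rfl⟩ : ∃ s, 0 < s ∧ t = s^2 :=
    ⟨Real.sqrt t, Real.sqrt_pos.2 ht, (Real.sq_sqrt ht.le).symm⟩
  rw [Real.sqrt_sq hs.le,
    show -(a^2 * (s^2)⁻¹) - k*s^2 = -(a^2/s^2) - k*s^2 by rw [div_eq_mul_inv]]
  field_simp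
  ring

lemma hasDerivAt_auxW (k a : ℝ) {t : ℝ} (hk : 0 < k) (ht : 0 < t) :
    HasDerivAt (auxW k a) (Real.exp (-(k*t)) * erf (a/Real.sqrt t)) t := by
  have hE := hasDerivAt_Ef k a hk ht
  have hP := hasDerivAt_Pf k a hk ht
  have hM := hasDerivAt_Mf k a hk ht
  have h := (hE.const_mul (-(1/k))).sub ((hP.add hM).const_mul (1/(2*k)))
  have h2 : HasDerivAt (auxW k a)
      (-(1/k) * (-(k * (Real.exp (-(k*t)) * erf (a/Real.sqrt t)))
          - a * Real.exp (-(a^2/t) - k*t) / (Real.sqrt π * (t*Real.sqrt t)))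
        - 1/(2*k) * (Real.exp (-(a^2/t) - k*t) / Real.sqrt π *
              (a/(t*Real.sqrt t) - Real.sqrt k/Real.sqrt t)
            + Real.exp (-(a^2/t) - k*t) / Real.sqrt π *
              (a/(t*Real.sqrt t) + Real.sqrt k/Real.sqrt t))) t := h
  convert h2 using 1
  have hπ : Real.sqrt π ≠ 0 := (Real.sqrt_pos.2 Real.pi_pos).ne'
  have hst : Real.sqrt t ≠ 0 := (Real.sqrt_pos.2 ht).ne'
  field_simp
  ring

lemma hasDerivAt_auxV (k a : ℝ) {t : ℝ} (hk : 0 < k) (ht : 0 < t) :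
    HasDerivAt (auxV k a) (Real.sqrt t * Real.exp (-(a^2/t) - k*t)) t := by
  have hS := hasDerivAt_Sf k a hk ht
  have hP := hasDerivAt_Pf k a hk ht
  have hM := hasDerivAt_Mf k a hk ht
  have h := ((hS.neg.add ((hM.sub hP).const_mul (Real.sqrt π/(4*Real.sqrt k)))).add
    ((hP.add hM).const_mul (a*Real.sqrt π/2))).const_mul (1/k)
  have h2 : HasDerivAt (auxV k a)
      (1/k * (-(Real.exp (-(a^2/t) - k*t) *
            (1/(2*Real.sqrt t) + a^2/(t*Real.sqrt t) - k*Real.sqrt t))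
          + Real.sqrt π/(4*Real.sqrt k) *
              (Real.exp (-(a^2/t) - k*t) / Real.sqrt π *
                  (a/(t*Real.sqrt t) + Real.sqrt k/Real.sqrt t)
                - Real.exp (-(a^2/t) - k*t) / Real.sqrt π *
                  (a/(t*Real.sqrt t) - Real.sqrt k/Real.sqrt t))
          + a*Real.sqrt π/2 *
              (Real.exp (-(a^2/t) - k*t) / Real.sqrt π *
                  (a/(t*Real.sqrt t) - Real.sqrt k/Real.sqrt t)
                + Real.exp (-(a^2/t) - k*t) / Real.sqrt π *
                  (a/(t*Real.sqrt t) + Real.sqrt k/Real.sqrt t)))) t := h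
  convert h2 using 1
  have hπ : Real.sqrt π ≠ 0 := (Real.sqrt_pos.2 Real.pi_pos).ne'
  have hst : Real.sqrt t ≠ 0 := (Real.sqrt_pos.2 ht).ne'
  have hsk : Real.sqrt k ≠ 0 := (Real.sqrt_pos.2 hk).ne'
  field_simp
  ring

lemma tendsto_sqrt_atTop : Tendsto Real.sqrt atTop atTop := by
  refine tendsto_atTop_atTop.2 fun b => ⟨max (b^2) 0, fun t ht => ?_⟩
  rcases le_or_gt b 0 with hb | hb
  · exact hb.trans (Real.sqrt_nonneg t)
  · have h1 : b ^ 2 ≤ t := le_trans (le_max_left _ _) ht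
    have h2 := Real.sqrt_le_sqrt h1
    rwa [Real.sqrt_sq hb.le] at h2

lemma tendsto_klin_atTop {k : ℝ} (hk : 0 < k) :
    Tendsto (fun t : ℝ => k*t) atTop atTop :=
  Tendsto.const_mul_atTop hk tendsto_id

lemma tendsto_sqrt_klin_atTop {k : ℝ} (hk : 0 < k) :
    Tendsto (fun t : ℝ => Real.sqrt (k*t)) atTop atTop :=
  _root_.tendsto_sqrt_atTop.comp (tendsto_klin_atTop hk)

lemma tendsto_div_sqrt_atTop (a : ℝ) :
    Tendsto (fun t : ℝ => a / Real.sqrt t) atTop (𝓝 0) :=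
  tendsto_const_nhds.div_atTop _root_.tendsto_sqrt_atTop

lemma tendsto_exp_neg_klin_atTop {k : ℝ} (hk : 0 < k) :
    Tendsto (fun t : ℝ => Real.exp (-(k*t))) atTop (𝓝 0) :=
  Real.tendsto_exp_atBot.comp (tendsto_neg_atTop_atBot.comp (tendsto_klin_atTop hk))

lemma tendsto_one_add_mul_exp_neg {k : ℝ} (hk : 0 < k) :
    Tendsto (fun t : ℝ => (1+t) * Real.exp (-(k*t))) atTop (𝓝 0) := by
  have h1 : Tendsto (fun t : ℝ => t * Real.exp (-(k*t))) atTop (𝓝 0) := by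
    have h := ((tendsto_pow_mul_exp_neg_atTop_nhds_zero 1).comp
      (tendsto_klin_atTop hk)).const_mul (1/k)
    rw [mul_zero] at h
    refine h.congr fun t => ?_
    simp only [Function.comp, pow_one]
    field_simp
  have h2 := (tendsto_exp_neg_klin_atTop hk).add h1
  rw [add_zero] at h2
  refine h2.congr fun t => ?_
  ring

lemma tendsto_Ef_atTop {k : ℝ} (hk : 0 < k) (a : ℝ) :
    Tendsto (fun t : ℝ => Real.exp (-(k*t)) * erf (a/Real.sqrt t)) atTop (𝓝 0) := by
  refine squeeze_zero_norm (fun t => ?_) (tendsto_exp_neg_klin_atTop hk)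
  rw [norm_mul, Real.norm_eq_abs, Real.norm_eq_abs, Real.abs_exp]
  calc Real.exp (-(k*t)) * |erf (a/Real.sqrt t)| ≤ Real.exp (-(k*t)) * 1 :=
        mul_le_mul_of_nonneg_left (abs_erf_le_one _) (Real.exp_pos _).le
    _ = Real.exp (-(k*t)) := mul_one _

lemma tendsto_Sf_atTop {k : ℝ} (hk : 0 < k) (a : ℝ) :
    Tendsto (fun t : ℝ => Real.sqrt t * Real.exp (-(a^2/t) - k*t)) atTop (𝓝 0) := by
  refine squeeze_zero_norm' ?_ (tendsto_one_add_mul_exp_neg hk)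
  filter_upwards [eventually_gt_atTop (0:ℝ), eventually_ge_atTop (1:ℝ)] with t ht ht1
  rw [norm_mul, Real.norm_eq_abs, Real.norm_eq_abs, Real.abs_exp,
    abs_of_nonneg (Real.sqrt_nonneg t)]
  have h1 : Real.sqrt t ≤ 1 + t := by
    rcases le_or_gt t 1 with h | h
    · have h2 : Real.sqrt t ≤ 1 := by
        rw [show (1:ℝ) = Real.sqrt 1 by rw [Real.sqrt_one]]
        exact Real.sqrt_le_sqrt h
      linarith
    · have h2 : Real.sqrt t ≤ t := by
        have h3 : Real.sqrt t ≤ Real.sqrt (t^2) := Real.sqrt_le_sqrt (by nlinarith)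
        rwa [Real.sqrt_sq ht.le] at h3
      linarith
  have h2 : Real.exp (-(a^2/t) - k*t) ≤ Real.exp (-(k*t)) := by
    refine Real.exp_le_exp.2 ?_
    have : 0 ≤ a^2/t := div_nonneg (sq_nonneg a) ht.le
    linarith
  exact mul_le_mul h1 h2 (Real.exp_pos _).le (by linarith [Real.sqrt_nonneg t])

lemma tendsto_auxW_atTop {k : ℝ} (hk : 0 < k) (a : ℝ) :
    Tendsto (auxW k a) atTop (𝓝 (-(Real.exp (-(2*a*Real.sqrt k))/k))) := by
  have hP : Tendsto (fun t : ℝ => erfc (a/Real.sqrt t + Real.sqrt (k*t))) atTop (𝓝 0) := by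
    have harg := (tendsto_div_sqrt_atTop a).add_atTop (tendsto_sqrt_klin_atTop hk)
    simpa [Function.comp_def] using tendsto_erfc_atTop.comp harg
  have hM : Tendsto (fun t : ℝ => erfc (a/Real.sqrt t - Real.sqrt (k*t))) atTop (𝓝 2) := by
    have harg : Tendsto (fun t : ℝ => a/Real.sqrt t - Real.sqrt (k*t)) atTop atBot := by
      have := (tendsto_div_sqrt_atTop a).add_atBot
        (tendsto_neg_atTop_atBot.comp (tendsto_sqrt_klin_atTop hk))
      simpa [sub_eq_add_neg] using this
    simpa [Function.comp_def] using tendsto_erfc_atBot.comp harg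
  have h := ((tendsto_Ef_atTop hk a).const_mul (-(1/k))).sub
    (((hP.const_mul (Real.exp (2*a*Real.sqrt k))).add
      (hM.const_mul (Real.exp (-(2*a*Real.sqrt k))))).const_mul (1/(2*k)))
  have heq : Tendsto (auxW k a) atTop
      (𝓝 (-(1/k) * 0 - 1/(2*k) * (Real.exp (2*a*Real.sqrt k) * 0
        + Real.exp (-(2*a*Real.sqrt k)) * 2))) := h
  convert heq using 2
  field_simp
  ring

lemma tendsto_auxV_atTop {k : ℝ} (hk : 0 < k) (a : ℝ) :
    Tendsto (auxV k a) atTop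
      (𝓝 (Real.exp (-(2*a*Real.sqrt k)) * Real.sqrt π * (1/(2*Real.sqrt k) + a) / k)) := by
  have hP : Tendsto (fun t : ℝ => erfc (a/Real.sqrt t + Real.sqrt (k*t))) atTop (𝓝 0) := by
    have harg := (tendsto_div_sqrt_atTop a).add_atTop (tendsto_sqrt_klin_atTop hk)
    simpa [Function.comp_def] using tendsto_erfc_atTop.comp harg
  have hM : Tendsto (fun t : ℝ => erfc (a/Real.sqrt t - Real.sqrt (k*t))) atTop (𝓝 2) := by
    have harg : Tendsto (fun t : ℝ => a/Real.sqrt t - Real.sqrt (k*t)) atTop atBot := by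
      have := (tendsto_div_sqrt_atTop a).add_atBot
        (tendsto_neg_atTop_atBot.comp (tendsto_sqrt_klin_atTop hk))
      simpa [sub_eq_add_neg] using this
    simpa [Function.comp_def] using tendsto_erfc_atBot.comp harg
  have hA := (tendsto_Sf_atTop hk a).neg
  have hB := ((hM.const_mul (Real.exp (-(2*a*Real.sqrt k)))).sub
      (hP.const_mul (Real.exp (2*a*Real.sqrt k)))).const_mul (Real.sqrt π/(4*Real.sqrt k))
  have hC := ((hP.const_mul (Real.exp (2*a*Real.sqrt k))).add
      (hM.const_mul (Real.exp (-(2*a*Real.sqrt k))))).const_mul (a*Real.sqrt π/2)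
  have h := ((hA.add hB).add hC).const_mul (1/k)
  have heq : Tendsto (auxV k a) atTop
      (𝓝 (1/k * (-0 + Real.sqrt π/(4*Real.sqrt k) *
          (Real.exp (-(2*a*Real.sqrt k)) * 2 - Real.exp (2*a*Real.sqrt k) * 0)
        + a*Real.sqrt π/2 * (Real.exp (2*a*Real.sqrt k) * 0
          + Real.exp (-(2*a*Real.sqrt k)) * 2)))) := h
  convert heq using 2
  have hsk : Real.sqrt k ≠ 0 := (Real.sqrt_pos.2 hk).ne'
  field_simp
  ring

lemma tendsto_sqrt_zero_within :
    Tendsto Real.sqrt (𝓝[>] (0:ℝ)) (𝓝[>] (0:ℝ)) := by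
  rw [tendsto_nhdsWithin_iff]
  constructor
  · have := (Real.continuous_sqrt.tendsto 0).mono_left (nhdsWithin_le_nhds (s := Ioi (0:ℝ)))
    simpa using this
  · filter_upwards [self_mem_nhdsWithin] with t ht
    exact Real.sqrt_pos.2 ht

lemma tendsto_inv_sqrt_zero : Tendsto (fun t : ℝ => (Real.sqrt t)⁻¹) (𝓝[>] (0:ℝ)) atTop :=
  tendsto_inv_nhdsGT_zero.comp tendsto_sqrt_zero_within

lemma tendsto_div_sqrt_zero {a : ℝ} (ha : 0 < a) :
    Tendsto (fun t : ℝ => a / Real.sqrt t) (𝓝[>] (0:ℝ)) atTop := by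
  have := Tendsto.const_mul_atTop ha tendsto_inv_sqrt_zero
  refine this.congr fun t => ?_
  rw [div_eq_mul_inv]

lemma tendsto_sqrt_klin_zero {k : ℝ} :
    Tendsto (fun t : ℝ => Real.sqrt (k*t)) (𝓝[>] (0:ℝ)) (𝓝 0) := by
  have h : Tendsto (fun t : ℝ => k*t) (𝓝[>] (0:ℝ)) (𝓝 0) := by
    have hc : Continuous fun t : ℝ => k*t := by continuity
    have := (hc.tendsto (0:ℝ)).mono_left (nhdsWithin_le_nhds (s := Ioi (0:ℝ)))
    simpa using this
  have := h.sqrt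
  simpa using this

lemma tendsto_exp_klin_zero {k : ℝ} :
    Tendsto (fun t : ℝ => Real.exp (-(k*t))) (𝓝[>] (0:ℝ)) (𝓝 1) := by
  have h : Tendsto (fun t : ℝ => -(k*t)) (𝓝[>] (0:ℝ)) (𝓝 0) := by
    have hc : Continuous fun t : ℝ => -(k*t) := by continuity
    have := (hc.tendsto (0:ℝ)).mono_left (nhdsWithin_le_nhds (s := Ioi (0:ℝ)))
    simpa using this
  have := (Real.continuous_exp.tendsto 0).comp h
  simpa [Function.comp_def] using this

lemma tendsto_Sf_zero (k a : ℝ) (hk : 0 < k) :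
    Tendsto (fun t : ℝ => Real.sqrt t * Real.exp (-(a^2/t) - k*t)) (𝓝[>] (0:ℝ)) (𝓝 0) := by
  have hg : Tendsto Real.sqrt (𝓝[>] (0:ℝ)) (𝓝 0) :=
    tendsto_sqrt_zero_within.mono_right nhdsWithin_le_nhds
  refine squeeze_zero_norm' ?_ hg
  filter_upwards [self_mem_nhdsWithin] with t ht
  rw [norm_mul, Real.norm_eq_abs, Real.norm_eq_abs, Real.abs_exp,
    abs_of_nonneg (Real.sqrt_nonneg t)]
  have h2 : Real.exp (-(a^2/t) - k*t) ≤ 1 := by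
    rw [show (1:ℝ) = Real.exp 0 by rw [Real.exp_zero]]
    refine Real.exp_le_exp.2 ?_
    have h3 : 0 ≤ a^2/t := div_nonneg (sq_nonneg a) (le_of_lt ht)
    have h4 : 0 ≤ k*t := (mul_pos hk ht).le
    linarith
  calc Real.sqrt t * Real.exp (-(a^2/t) - k*t) ≤ Real.sqrt t * 1 :=
        mul_le_mul_of_nonneg_left h2 (Real.sqrt_nonneg t)
    _ = Real.sqrt t := mul_one _

lemma tendsto_auxW_zero {k : ℝ} (hk : 0 < k) {a : ℝ} (ha : 0 ≤ a) :
    Tendsto (auxW k a) (𝓝[>] (0:ℝ)) (𝓝 (-(1/k))) := by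
  rcases ha.eq_or_lt with rfl | ha
  · -- a = 0 : auxW is constant
    have hconst : ∀ t : ℝ, auxW k 0 t = -(1/k) := by
      intro t
      simp only [auxW, zero_div, erf_zero, mul_zero, zero_mul, Real.exp_zero, one_mul,
        zero_add, zero_sub, neg_zero, mul_one]
      rw [erfc_add_erfc_neg]
      field_simp
    exact Tendsto.congr (fun t => (hconst t).symm) tendsto_const_nhds
  · have hEf : Tendsto (fun t : ℝ => Real.exp (-(k*t)) * erf (a/Real.sqrt t))
        (𝓝[>] (0:ℝ)) (𝓝 1) := by
      have herf : Tendsto (fun t : ℝ => erf (a/Real.sqrt t)) (𝓝[>] (0:ℝ)) (𝓝 1) := by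
        have := tendsto_erf_atTop.comp (tendsto_div_sqrt_zero ha)
        simpa [Function.comp_def] using this
      have := (tendsto_exp_klin_zero (k := k)).mul herf
      simpa using this
    have hP : Tendsto (fun t : ℝ => erfc (a/Real.sqrt t + Real.sqrt (k*t)))
        (𝓝[>] (0:ℝ)) (𝓝 0) := by
      have harg := (tendsto_div_sqrt_zero ha).atTop_add (tendsto_sqrt_klin_zero (k := k))
      simpa [Function.comp_def] using tendsto_erfc_atTop.comp harg
    have hM : Tendsto (fun t : ℝ => erfc (a/Real.sqrt t - Real.sqrt (k*t)))
        (𝓝[>] (0:ℝ)) (𝓝 0) := by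
      have harg : Tendsto (fun t : ℝ => a/Real.sqrt t - Real.sqrt (k*t)) (𝓝[>] (0:ℝ)) atTop := by
        have := (tendsto_div_sqrt_zero ha).atTop_add (tendsto_sqrt_klin_zero (k := k)).neg
        simpa [sub_eq_add_neg] using this
      simpa [Function.comp_def] using tendsto_erfc_atTop.comp harg
    have h := (hEf.const_mul (-(1/k))).sub
      (((hP.const_mul (Real.exp (2*a*Real.sqrt k))).add
        (hM.const_mul (Real.exp (-(2*a*Real.sqrt k))))).const_mul (1/(2*k)))
    have heq : Tendsto (auxW k a) (𝓝[>] (0:ℝ))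
        (𝓝 (-(1/k) * 1 - 1/(2*k) * (Real.exp (2*a*Real.sqrt k) * 0
          + Real.exp (-(2*a*Real.sqrt k)) * 0))) := h
    convert heq using 2
    ring

lemma tendsto_auxV_zero {k : ℝ} (hk : 0 < k) {a : ℝ} (ha : 0 ≤ a) :
    Tendsto (auxV k a) (𝓝[>] (0:ℝ)) (𝓝 0) := by
  have hS := tendsto_Sf_zero k a hk
  rcases ha.eq_or_lt with rfl | ha
  · -- a = 0
    have hPc : Tendsto (fun t : ℝ => erfc (0/Real.sqrt t + Real.sqrt (k*t)))
        (𝓝[>] (0:ℝ)) (𝓝 1) := by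
      have := (erfc_continuous.tendsto 0).comp
        ((tendsto_sqrt_klin_zero (k := k)))
      simpa [Function.comp_def, erfc_zero] using this
    have hMc : Tendsto (fun t : ℝ => erfc (0/Real.sqrt t - Real.sqrt (k*t)))
        (𝓝[>] (0:ℝ)) (𝓝 1) := by
      have hneg : Tendsto (fun t : ℝ => -Real.sqrt (k*t)) (𝓝[>] (0:ℝ)) (𝓝 0) := by
        simpa using (tendsto_sqrt_klin_zero (k := k)).neg
      have := (erfc_continuous.tendsto 0).comp hneg
      simpa [Function.comp_def, erfc_zero] using this
    have hA := hS.neg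
    have hB := ((hMc.const_mul (Real.exp (-(2*0*Real.sqrt k)))).sub
        (hPc.const_mul (Real.exp (2*0*Real.sqrt k)))).const_mul (Real.sqrt π/(4*Real.sqrt k))
    have hC := ((hPc.const_mul (Real.exp (2*0*Real.sqrt k))).add
        (hMc.const_mul (Real.exp (-(2*0*Real.sqrt k))))).const_mul ((0:ℝ)*Real.sqrt π/2)
    have h := ((hA.add hB).add hC).const_mul (1/k)
    have heq : Tendsto (auxV k 0) (𝓝[>] (0:ℝ))
        (𝓝 (1/k * (-0 + Real.sqrt π/(4*Real.sqrt k) *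
            (Real.exp (-(2*0*Real.sqrt k)) * 1 - Real.exp (2*0*Real.sqrt k) * 1)
          + 0*Real.sqrt π/2 * (Real.exp (2*0*Real.sqrt k) * 1
            + Real.exp (-(2*0*Real.sqrt k)) * 1)))) := h
    convert heq using 2
    simp
  · have hP : Tendsto (fun t : ℝ => erfc (a/Real.sqrt t + Real.sqrt (k*t)))
        (𝓝[>] (0:ℝ)) (𝓝 0) := by
      have harg := (tendsto_div_sqrt_zero ha).atTop_add (tendsto_sqrt_klin_zero (k := k))
      simpa [Function.comp_def] using tendsto_erfc_atTop.comp harg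
    have hM : Tendsto (fun t : ℝ => erfc (a/Real.sqrt t - Real.sqrt (k*t)))
        (𝓝[>] (0:ℝ)) (𝓝 0) := by
      have harg : Tendsto (fun t : ℝ => a/Real.sqrt t - Real.sqrt (k*t)) (𝓝[>] (0:ℝ)) atTop := by
        have := (tendsto_div_sqrt_zero ha).atTop_add (tendsto_sqrt_klin_zero (k := k)).neg
        simpa [sub_eq_add_neg] using this
      simpa [Function.comp_def] using tendsto_erfc_atTop.comp harg
    have hA := hS.neg
    have hB := ((hM.const_mul (Real.exp (-(2*a*Real.sqrt k)))).sub
        (hP.const_mul (Real.exp (2*a*Real.sqrt k)))).const_mul (Real.sqrt π/(4*Real.sqrt k))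
    have hC := ((hP.const_mul (Real.exp (2*a*Real.sqrt k))).add
        (hM.const_mul (Real.exp (-(2*a*Real.sqrt k))))).const_mul (a*Real.sqrt π/2)
    have h := ((hA.add hB).add hC).const_mul (1/k)
    have heq : Tendsto (auxV k a) (𝓝[>] (0:ℝ))
        (𝓝 (1/k * (-0 + Real.sqrt π/(4*Real.sqrt k) *
            (Real.exp (-(2*a*Real.sqrt k)) * 0 - Real.exp (2*a*Real.sqrt k) * 0)
          + a*Real.sqrt π/2 * (Real.exp (2*a*Real.sqrt k) * 0
            + Real.exp (-(2*a*Real.sqrt k)) * 0)))) := h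
    convert heq using 2
    ring

lemma tendsto_sqrt_mul_exp_atTop {c : ℝ} (hc : 0 < c) :
    Tendsto (fun t : ℝ => Real.sqrt t * Real.exp (-(c*t))) atTop (𝓝 0) := by
  refine squeeze_zero_norm' ?_ (tendsto_one_add_mul_exp_neg hc)
  filter_upwards [eventually_gt_atTop (0:ℝ)] with t ht
  rw [norm_mul, Real.norm_eq_abs, Real.norm_eq_abs, Real.abs_exp,
    abs_of_nonneg (Real.sqrt_nonneg t)]
  have h1 : Real.sqrt t ≤ 1 + t := by
    rcases le_or_gt t 1 with h | h
    · have h2 : Real.sqrt t ≤ 1 := by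
        rw [show (1:ℝ) = Real.sqrt 1 by rw [Real.sqrt_one]]
        exact Real.sqrt_le_sqrt h
      linarith
    · have h2 : Real.sqrt t ≤ t := by
        have h3 : Real.sqrt t ≤ Real.sqrt (t^2) := Real.sqrt_le_sqrt (by nlinarith)
        rwa [Real.sqrt_sq ht.le] at h3
      linarith
  exact mul_le_mul_of_nonneg_right h1 (Real.exp_pos _).le

lemma integrable_sqrt_exp {k : ℝ} (hk : 0 < k) :
    IntegrableOn (fun t : ℝ => Real.sqrt t * Real.exp (-(k*t))) (Ioi (0:ℝ)) := by
  have h0 : 0 < k/2 := half_pos hk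
  refine integrable_of_isBigO_exp_neg h0 ?_ ?_
  · exact (Real.continuous_sqrt.mul
      (Real.continuous_exp.comp (by continuity))).continuousOn
  · have heq : ∀ t : ℝ, Real.sqrt t * Real.exp (-(k/2*t))
        = Real.sqrt t * Real.exp (-(k*t)) / Real.exp (-(k/2) * t) := by
      intro t
      rw [mul_div_assoc, ← Real.exp_sub, show -(k*t) - -(k/2)*t = -(k/2*t) by ring]
    have ht := (tendsto_sqrt_mul_exp_atTop h0).congr heq
    exact (Asymptotics.isLittleO_of_tendsto
      (fun x hx => absurd hx (Real.exp_ne_zero _)) ht).isBigO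

lemma integrand_integrableOn (D k q R₀ d : ℝ)
    (hD : 0 < D) (hk : 0 < k) (hq : 0 < q) (hR₀ : 0 < R₀) (hd : 0 < d) :
    IntegrableOn (fun t =>
        q * ((1 / 2) * (erf ((R₀ + d) / (2 * Real.sqrt (D * t)))
                        + erf ((R₀ - d) / (2 * Real.sqrt (D * t))))
              + Real.sqrt (D * t) / (d * Real.sqrt π) *
                  (Real.exp (-(R₀ + d) ^ 2 / (4 * D * t))
                    - Real.exp (-(R₀ - d) ^ 2 / (4 * D * t))))
          * Real.exp (-k * t)) (Ioi (0:ℝ)) := by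
  have hπ : 0 < Real.sqrt π := Real.sqrt_pos.2 Real.pi_pos
  -- continuity on Ioi 0
  have hcont : ContinuousOn (fun t =>
      q * ((1 / 2) * (erf ((R₀ + d) / (2 * Real.sqrt (D * t)))
                      + erf ((R₀ - d) / (2 * Real.sqrt (D * t))))
            + Real.sqrt (D * t) / (d * Real.sqrt π) *
                (Real.exp (-(R₀ + d) ^ 2 / (4 * D * t))
                  - Real.exp (-(R₀ - d) ^ 2 / (4 * D * t))))
        * Real.exp (-k * t)) (Ioi (0:ℝ)) := by
    have hden : ∀ t ∈ Ioi (0:ℝ), 2 * Real.sqrt (D * t) ≠ 0 := by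
      intro t ht
      have h1 : 0 < D * t := mul_pos hD ht
      have := Real.sqrt_pos.2 h1
      positivity
    have hden2 : ∀ t ∈ Ioi (0:ℝ), 4 * D * t ≠ 0 := by
      intro t ht
      have : (0:ℝ) < t := ht
      positivity
    have hsq : ContinuousOn (fun t : ℝ => Real.sqrt (D * t)) (Ioi 0) :=
      (Real.continuous_sqrt.comp (by continuity)).continuousOn
    have hc1 : ContinuousOn (fun t : ℝ => erf ((R₀ + d) / (2 * Real.sqrt (D * t)))) (Ioi 0) :=
      erf_continuous.comp_continuousOn
        (ContinuousOn.div continuousOn_const (continuousOn_const.mul hsq) hden)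
    have hc2 : ContinuousOn (fun t : ℝ => erf ((R₀ - d) / (2 * Real.sqrt (D * t)))) (Ioi 0) :=
      erf_continuous.comp_continuousOn
        (ContinuousOn.div continuousOn_const (continuousOn_const.mul hsq) hden)
    have hc3 : ContinuousOn (fun t : ℝ => Real.exp (-(R₀ + d) ^ 2 / (4 * D * t))) (Ioi 0) :=
      Real.continuous_exp.comp_continuousOn
        (ContinuousOn.div continuousOn_const (by fun_prop) hden2)
    have hc4 : ContinuousOn (fun t : ℝ => Real.exp (-(R₀ - d) ^ 2 / (4 * D * t))) (Ioi 0) :=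
      Real.continuous_exp.comp_continuousOn
        (ContinuousOn.div continuousOn_const (by fun_prop) hden2)
    exact ((continuousOn_const.mul
      ((continuousOn_const.mul (hc1.add hc2)).add
        ((hsq.div_const _).mul (hc3.sub hc4)))).mul
      (Real.continuous_exp.comp (by continuity)).continuousOn)
  have hmeas := hcont.aestronglyMeasurable (μ := volume) measurableSet_Ioi
  -- the dominating function
  set g : ℝ → ℝ := fun t => q * Real.exp (-k * t)
    + q * Real.sqrt D / (d * Real.sqrt π) * (Real.sqrt t * Real.exp (-k * t)) with hg
  have hgint : IntegrableOn g (Ioi (0:ℝ)) := by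
    have h1 : IntegrableOn (fun t : ℝ => Real.exp (-k * t)) (Ioi (0:ℝ)) :=
      exp_neg_integrableOn_Ioi 0 hk
    have h2 : IntegrableOn (fun t : ℝ => Real.sqrt t * Real.exp (-k * t)) (Ioi (0:ℝ)) := by
      have := integrable_sqrt_exp hk
      refine this.congr_fun ?_ measurableSet_Ioi
      intro t _
      simp only [neg_mul]
    exact (h1.const_mul q).add (h2.const_mul _)
  refine hgint.mono' hmeas ?_
  rw [ae_restrict_iff' measurableSet_Ioi]
  refine Eventually.of_forall fun t ht => ?_
  have ht0 : (0:ℝ) < t := ht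
  have hDt : 0 < D * t := mul_pos hD ht0
  have hsqDt : Real.sqrt (D*t) = Real.sqrt D * Real.sqrt t := Real.sqrt_mul hD.le t
  set S := (1 / 2) * (erf ((R₀ + d) / (2 * Real.sqrt (D * t)))
      + erf ((R₀ - d) / (2 * Real.sqrt (D * t))))
    + Real.sqrt (D * t) / (d * Real.sqrt π) *
        (Real.exp (-(R₀ + d) ^ 2 / (4 * D * t)) - Real.exp (-(R₀ - d) ^ 2 / (4 * D * t))) with hS
  have hSbound : |S| ≤ 1 + Real.sqrt D * Real.sqrt t / (d * Real.sqrt π) := by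
    have h1 : |(1:ℝ) / 2 * (erf ((R₀ + d) / (2 * Real.sqrt (D * t)))
        + erf ((R₀ - d) / (2 * Real.sqrt (D * t))))| ≤ 1 := by
      rw [abs_mul]
      have := abs_add_le (erf ((R₀ + d) / (2 * Real.sqrt (D * t))))
        (erf ((R₀ - d) / (2 * Real.sqrt (D * t))))
      have e1 := abs_erf_le_one ((R₀ + d) / (2 * Real.sqrt (D * t)))
      have e2 := abs_erf_le_one ((R₀ - d) / (2 * Real.sqrt (D * t)))
      rw [abs_of_nonneg (by norm_num : (0:ℝ) ≤ 1/2)]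
      nlinarith
    have h2 : |Real.sqrt (D * t) / (d * Real.sqrt π) *
        (Real.exp (-(R₀ + d) ^ 2 / (4 * D * t)) - Real.exp (-(R₀ - d) ^ 2 / (4 * D * t)))|
        ≤ Real.sqrt D * Real.sqrt t / (d * Real.sqrt π) := by
      rw [abs_mul]
      have hco : |Real.sqrt (D * t) / (d * Real.sqrt π)|
          = Real.sqrt D * Real.sqrt t / (d * Real.sqrt π) := by
        rw [abs_of_nonneg (by positivity), hsqDt]
      rw [hco]
      have hpos : (0:ℝ) < 4 * D * t := by positivity
      have e1 : Real.exp (-(R₀ + d) ^ 2 / (4 * D * t)) ≤ 1 := by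
        rw [Real.exp_le_one_iff]
        exact div_nonpos_of_nonpos_of_nonneg (neg_nonpos.2 (sq_nonneg _)) hpos.le
      have e2 : Real.exp (-(R₀ - d) ^ 2 / (4 * D * t)) ≤ 1 := by
        rw [Real.exp_le_one_iff]
        exact div_nonpos_of_nonpos_of_nonneg (neg_nonpos.2 (sq_nonneg _)) hpos.le
      have p1 := Real.exp_pos (-(R₀ + d) ^ 2 / (4 * D * t))
      have p2 := Real.exp_pos (-(R₀ - d) ^ 2 / (4 * D * t))
      have hdiff : |Real.exp (-(R₀ + d) ^ 2 / (4 * D * t))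
          - Real.exp (-(R₀ - d) ^ 2 / (4 * D * t))| ≤ 1 :=
        abs_le.2 ⟨by linarith, by linarith⟩
      have hcopos : (0:ℝ) ≤ Real.sqrt D * Real.sqrt t / (d * Real.sqrt π) := by positivity
      calc Real.sqrt D * Real.sqrt t / (d * Real.sqrt π) *
            |Real.exp (-(R₀ + d) ^ 2 / (4 * D * t)) - Real.exp (-(R₀ - d) ^ 2 / (4 * D * t))|
          ≤ Real.sqrt D * Real.sqrt t / (d * Real.sqrt π) * 1 :=
            mul_le_mul_of_nonneg_left hdiff hcopos
        _ = Real.sqrt D * Real.sqrt t / (d * Real.sqrt π) := mul_one _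
    calc |S| ≤ |(1:ℝ) / 2 * (erf ((R₀ + d) / (2 * Real.sqrt (D * t)))
          + erf ((R₀ - d) / (2 * Real.sqrt (D * t))))|
        + |Real.sqrt (D * t) / (d * Real.sqrt π) *
            (Real.exp (-(R₀ + d) ^ 2 / (4 * D * t))
              - Real.exp (-(R₀ - d) ^ 2 / (4 * D * t)))| := by
          rw [hS]; exact abs_add_le _ _
      _ ≤ 1 + Real.sqrt D * Real.sqrt t / (d * Real.sqrt π) := add_le_add h1 h2
  have hexp := Real.exp_pos (-k * t)
  calc ‖q * S * Real.exp (-k * t)‖ = q * |S| * Real.exp (-k * t) := by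
        rw [norm_mul, norm_mul, Real.norm_eq_abs, Real.norm_eq_abs, Real.norm_eq_abs,
          abs_of_pos hq, Real.abs_exp]
    _ ≤ q * (1 + Real.sqrt D * Real.sqrt t / (d * Real.sqrt π)) * Real.exp (-k * t) :=
        mul_le_mul_of_nonneg_right (mul_le_mul_of_nonneg_left hSbound hq.le) hexp.le
    _ = g t := by rw [hg]; ring

lemma final_algebra (D k q R₀ d : ℝ) (hD : 0 < D) (hk : 0 < k) (hd : 0 < d) :
    (q*((1/2)*(-(Real.exp (-(2*((R₀+d)/(2*Real.sqrt D))*Real.sqrt k))/k)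
          + -(Real.exp (-(2*((R₀-d)/(2*Real.sqrt D))*Real.sqrt k))/k))
        + Real.sqrt D/(d*Real.sqrt π) *
          (Real.exp (-(2*((R₀+d)/(2*Real.sqrt D))*Real.sqrt k)) * Real.sqrt π *
              (1/(2*Real.sqrt k) + (R₀+d)/(2*Real.sqrt D))/k
           - Real.exp (-(2*((R₀-d)/(2*Real.sqrt D))*Real.sqrt k)) * Real.sqrt π *
              (1/(2*Real.sqrt k) + (R₀-d)/(2*Real.sqrt D))/k)))
      - q*((1/2)*(-(1/k) + -(1/k)) + Real.sqrt D/(d*Real.sqrt π) * ((0:ℝ) - 0))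
    = q / (2 * k ^ 2) * (2 * k - Real.exp (-Real.sqrt (k / D) * (R₀ + d)) *
        (Real.exp (2 * d * Real.sqrt (k / D)) - 1) * (Real.sqrt (D * k) + k * R₀) / d) := by
  obtain ⟨c, hc, rfl⟩ : ∃ c, 0 < c ∧ D = c^2 :=
    ⟨Real.sqrt D, Real.sqrt_pos.2 hD, (Real.sq_sqrt hD.le).symm⟩
  obtain ⟨r, hr, rfl⟩ : ∃ r, 0 < r ∧ k = r^2 :=
    ⟨Real.sqrt k, Real.sqrt_pos.2 hk, (Real.sq_sqrt hk.le).symm⟩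
  have hπ : 0 < Real.sqrt π := Real.sqrt_pos.2 Real.pi_pos
  rw [Real.sqrt_sq hc.le, Real.sqrt_sq hr.le,
    show (r^2/c^2 : ℝ) = (r/c)^2 by ring,
    Real.sqrt_sq (by positivity : (0:ℝ) ≤ r/c),
    show (c^2*r^2 : ℝ) = (c*r)^2 by ring,
    Real.sqrt_sq (by positivity : (0:ℝ) ≤ c*r)]
  rw [show (-(r/c)*(R₀+d) : ℝ) = -(2*((R₀+d)/(2*c))*r) + 0 by field_simp; ring]
  rw [Real.exp_add, Real.exp_zero, mul_one]
  rw [show (-(2*((R₀-d)/(2*c))*r) : ℝ) = -(2*((R₀+d)/(2*c))*r) + 2*d*(r/c) by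
    field_simp; ring]
  rw [Real.exp_add]
  set E := Real.exp (-(2*((R₀+d)/(2*c))*r)) with hE
  set X := Real.exp (2*d*(r/c)) with hX
  field_simp
  ring

/-- Equations (B.2)–(B.3) of the paper: exact asymptotic channel response at a
passive spherical receiver of radius `R₀` at distance `0 < d ≤ R₀` from a
continuously emitting point transmitter. -/
theorem passive_rx_exact_channel_response (D k q R₀ d : ℝ)
    (hD : 0 < D) (hk : 0 < k) (hq : 0 < q) (hR₀ : 0 < R₀)
    (hd : 0 < d) (hdR : d ≤ R₀) :
    ∫ t in Ioi (0 : ℝ),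
        q * ((1 / 2) * (erf ((R₀ + d) / (2 * Real.sqrt (D * t)))
                        + erf ((R₀ - d) / (2 * Real.sqrt (D * t))))
              + Real.sqrt (D * t) / (d * Real.sqrt π) *
                  (Real.exp (-(R₀ + d) ^ 2 / (4 * D * t))
                    - Real.exp (-(R₀ - d) ^ 2 / (4 * D * t))))
          * Real.exp (-k * t)
      = q / (2 * k ^ 2) *
          (2 * k - Real.exp (-Real.sqrt (k / D) * (R₀ + d)) *
            (Real.exp (2 * d * Real.sqrt (k / D)) - 1) *
              (Real.sqrt (D * k) + k * R₀) / d) := by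
  have hπ : 0 < Real.sqrt π := Real.sqrt_pos.2 Real.pi_pos
  have hsD : 0 < Real.sqrt D := Real.sqrt_pos.2 hD
  set A := (R₀+d)/(2*Real.sqrt D) with hA
  set B := (R₀-d)/(2*Real.sqrt D) with hB
  have hA0 : 0 ≤ A := by rw [hA]; positivity
  have hB0 : 0 ≤ B := by
    rw [hB]
    exact div_nonneg (by linarith) (by positivity)
  set c := Real.sqrt D/(d*Real.sqrt π) with hc
  set F : ℝ → ℝ := fun t => if t ≤ 0 then q*((1/2)*(-(1/k) + -(1/k)) + c*((0:ℝ) - 0))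
    else q*((1/2)*(auxW k A t + auxW k B t) + c*(auxV k A t - auxV k B t)) with hF
  have hF0 : F 0 = q*((1/2)*(-(1/k) + -(1/k)) + c*((0:ℝ) - 0)) := by
    rw [hF]; simp
  have hderiv : ∀ t ∈ Ioi (0:ℝ), HasDerivAt F
      ((fun t => q * ((1 / 2) * (erf ((R₀ + d) / (2 * Real.sqrt (D * t)))
                        + erf ((R₀ - d) / (2 * Real.sqrt (D * t))))
              + Real.sqrt (D * t) / (d * Real.sqrt π) *
                  (Real.exp (-(R₀ + d) ^ 2 / (4 * D * t))
                    - Real.exp (-(R₀ - d) ^ 2 / (4 * D * t))))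
          * Real.exp (-k * t)) t) t := by
    intro t ht
    have ht0 : (0:ℝ) < t := ht
    have hst : 0 < Real.sqrt t := Real.sqrt_pos.2 ht0
    have h0 := ((((hasDerivAt_auxW k A hk ht0).add (hasDerivAt_auxW k B hk ht0)).const_mul
        ((1:ℝ)/2)).add
      (((hasDerivAt_auxV k A hk ht0).sub (hasDerivAt_auxV k B hk ht0)).const_mul c)).const_mul q
    have hev : F =ᶠ[𝓝 t]
        (fun t => q*((1/2)*(auxW k A t + auxW k B t) + c*(auxV k A t - auxV k B t))) := by
      filter_upwards [lt_mem_nhds ht0] with u hu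
      rw [hF]
      simp only [not_le.2 hu, if_false]
    have h1 := h0.congr_of_eventuallyEq hev
    refine h1.congr_deriv ?_
    symm
    have hsqDt : Real.sqrt (D*t) = Real.sqrt D * Real.sqrt t := Real.sqrt_mul hD.le t
    have e1 : (R₀+d)/(2*Real.sqrt (D*t)) = A/Real.sqrt t := by
      rw [hsqDt, hA, div_div, ← mul_assoc]
    have e2 : (R₀-d)/(2*Real.sqrt (D*t)) = B/Real.sqrt t := by
      rw [hsqDt, hB, div_div, ← mul_assoc]
    have eA2 : A^2 = (R₀+d)^2/(4*D) := by
      rw [hA, div_pow, mul_pow, Real.sq_sqrt hD.le]; norm_num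
    have eB2 : B^2 = (R₀-d)^2/(4*D) := by
      rw [hB, div_pow, mul_pow, Real.sq_sqrt hD.le]; norm_num
    have e3 : Real.exp (-(A^2/t) - k*t)
        = Real.exp (-(R₀+d)^2/(4*D*t)) * Real.exp (-k*t) := by
      rw [← Real.exp_add]; congr 1; rw [eA2]; field_simp; ring
    have e4 : Real.exp (-(B^2/t) - k*t)
        = Real.exp (-(R₀-d)^2/(4*D*t)) * Real.exp (-k*t) := by
      rw [← Real.exp_add]; congr 1; rw [eB2]; field_simp; ring
    have e5 : Real.exp (-(k*t)) = Real.exp (-k*t) := by rw [neg_mul]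
    beta_reduce
    rw [e1, e2, e3, e4, e5, hsqDt, hc]
    ring
  have hcont : ContinuousWithinAt F (Ici (0:ℝ)) 0 := by
    rw [← Set.Ioi_insert, continuousWithinAt_insert_self]
    have hT : Tendsto
        (fun t => q*((1/2)*(auxW k A t + auxW k B t) + c*(auxV k A t - auxV k B t)))
        (𝓝[>] (0:ℝ)) (𝓝 (q*((1/2)*(-(1/k) + -(1/k)) + c*((0:ℝ) - 0)))) :=
      ((((tendsto_auxW_zero hk hA0).add (tendsto_auxW_zero hk hB0)).const_mul ((1:ℝ)/2)).add
        (((tendsto_auxV_zero hk hA0).sub (tendsto_auxV_zero hk hB0)).const_mul c)).const_mul q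
    have hev : (fun t => q*((1/2)*(auxW k A t + auxW k B t) + c*(auxV k A t - auxV k B t)))
        =ᶠ[𝓝[>] (0:ℝ)] F := by
      filter_upwards [self_mem_nhdsWithin] with u hu
      rw [hF]
      simp only [not_le.2 (show (0:ℝ) < u from hu), if_false]
    show Tendsto F (𝓝[Ioi 0] (0:ℝ)) (𝓝 (F 0))
    rw [hF0]
    exact Tendsto.congr' hev hT
  have htop := ((((tendsto_auxW_atTop hk A).add (tendsto_auxW_atTop hk B)).const_mul
      ((1:ℝ)/2)).add
    (((tendsto_auxV_atTop hk A).sub (tendsto_auxV_atTop hk B)).const_mul c)).const_mul q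
  have htopF : Tendsto F atTop
      (𝓝 (q * (1/2 * (-(Real.exp (-(2*A*Real.sqrt k))/k) + -(Real.exp (-(2*B*Real.sqrt k))/k))
        + c * (Real.exp (-(2*A*Real.sqrt k)) * Real.sqrt π * (1/(2*Real.sqrt k) + A)/k
             - Real.exp (-(2*B*Real.sqrt k)) * Real.sqrt π * (1/(2*Real.sqrt k) + B)/k)))) := by
    refine Tendsto.congr' ?_ htop
    filter_upwards [eventually_gt_atTop (0:ℝ)] with u hu
    rw [hF]
    simp only [not_le.2 hu, if_false]
  have hint := integrand_integrableOn D k q R₀ d hD hk hq hR₀ hd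
  have key := integral_Ioi_of_hasDerivAt_of_tendsto hcont hderiv hint htopF
  rw [key, hF0, hA, hB, hc]
  exact final_algebra D k q R₀ d hD hk hd
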